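/- (Outer AB condition) Let C be an [N,K,D]_{q^k} linear code with maximum weight W satisfying D/W > (q−1)/q, and let I be an [n,k,d]_q minimal code with F_q-linear injection π: F_{q^k} → F_q^n whose image is I. Then the concatenated code I □_π C = {(π(c_1),…,π(c_N)) : c ∈ C} is a minimal linear code over F_q of length Nn, dimension Kk, and minimum distance at least Dd. -/

import Mathlib

/-- Hamming weight of a vector. -/
noncomputable def hwt {ι F : Type*} [Zero F] (v : ι → F) : ℕ := {i | v i ≠ 0}.ncard

/-- A code is minimal if the support of every nonzero codeword contains the support of no
nonzero codeword other than its scalar multiples. -/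
def IsMinimalCode {F ι : Type*} [Field F] (C : Set (ι → F)) : Prop :=
  ∀ c ∈ C, c ≠ 0 → ∀ c' ∈ C, c' ≠ 0 → {i | c' i ≠ 0} ⊆ {i | c i ≠ 0} →
    ∃ l : F, l ≠ 0 ∧ c' = l • c

/-- The concatenation `I □_π C` of an outer code `C ⊆ E^N` over the extension field `E` with
the inner code `I = π(E) ⊆ F^n`, applying `π` coordinatewise. -/
def concatCode {F E : Type*} [Field F] [Field E] [Algebra F E] {N n : ℕ}
    (C : Submodule E (Fin N → E)) (π : E →ₗ[F] (Fin n → F)) : Set (Fin N × Fin n → F) :=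
  {x | ∃ c ∈ C, x = fun p => π (c p.1) p.2}

lemma hwt_eq_card {ι G : Type*} [Fintype ι] [Zero G] (v : ι → G)
    [DecidablePred fun i => v i ≠ 0] :
    hwt v = (Finset.univ.filter (fun i => v i ≠ 0)).card := by
  rw [hwt, Set.ncard_eq_toFinset_card']
  congr 1; ext i; simp

/-- concatenation as a linear map -/
def concatMap {F E : Type*} [Field F] [Field E] [Algebra F E] {N n : ℕ}
    (π : E →ₗ[F] (Fin n → F)) : (Fin N → E) →ₗ[F] (Fin N × Fin n → F) where
  toFun c := fun p => π (c p.1) p.2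
  map_add' := by intros a b; funext p; simp
  map_smul' := by intros a c; funext p; simp

section
variable {F E : Type*} [Field F] [Field E] [Algebra F E] {N n : ℕ}
  (π : E →ₗ[F] (Fin n → F))

lemma concatMap_inj (hπ : Function.Injective π) :
    Function.Injective (concatMap (N := N) π) := by
  intro a b h
  funext i
  apply hπ
  funext j
  exact congrFun h (i, j)

open Finset in
lemma hwt_concatMap (c : Fin N → E) :
    hwt (concatMap π c) = ∑ i, hwt (π (c i)) := by
  classical
  simp only [hwt_eq_card]
  rw [Finset.card_eq_sum_card_fiberwise (f := Prod.fst) (t := univ) (fun x _ => mem_univ _)]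
  refine Finset.sum_congr rfl fun a _ => ?_
  refine Finset.card_nbij' (fun p => p.2) (fun b => (a, b)) ?_ ?_ ?_ ?_
  · rintro ⟨a', b⟩ hp
    simp only [mem_coe, mem_filter, mem_univ, true_and, concatMap, LinearMap.coe_mk, AddHom.coe_mk] at hp ⊢
    obtain ⟨h1, rfl⟩ := hp
    exact (Finset.mem_filter.mp h1).2
  · intro b hb
    simp only [mem_coe, mem_filter, mem_univ, true_and, concatMap, LinearMap.coe_mk, AddHom.coe_mk] at hb ⊢
    exact ⟨Finset.mem_filter.mpr ⟨mem_univ _, hb⟩, trivial⟩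
  · rintro ⟨a', b⟩ hp
    simp only [mem_coe, mem_filter] at hp
    simp [hp.2]
  · intro b _; rfl
end

section
variable {F E : Type*} [Field F] [Field E] [Algebra F E] {N n : ℕ}
  (C : Submodule E (Fin N → E)) (π : E →ₗ[F] (Fin n → F))

lemma concatCode_eq :
    concatCode C π = (Submodule.map (concatMap π) (C.restrictScalars F) : Set _) := by
  ext x
  constructor
  · rintro ⟨c, hc, rfl⟩
    exact ⟨c, hc, rfl⟩
  · rintro ⟨c, hc, rfl⟩
    exact ⟨c, hc, rfl⟩

lemma finrank_concat (hπ : Function.Injective π) {k K : ℕ}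
    (hk : Module.finrank F E = k) (hK : Module.finrank E C = K) :
    Module.finrank F (Submodule.span F (concatCode C π)) = K * k := by
  rw [concatCode_eq, Submodule.span_eq]
  have e1 := (Submodule.equivMapOfInjective (concatMap π) (concatMap_inj π hπ)
    (C.restrictScalars F)).symm.finrank_eq
  have e2 := ((Submodule.restrictScalarsEquiv F E (Fin N → E) C).restrictScalars F).finrank_eq
  have e3 := Module.finrank_mul_finrank F E C
  rw [e1, e2, ← e3, hk, hK, mul_comm]
end

lemma concat_minimal {F E : Type*} [Field F] [Fintype F] [Field E] [Algebra F E] {N n : ℕ}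
    (C : Submodule E (Fin N → E)) {D W : ℕ}
    (hD : ∀ c ∈ C, c ≠ 0 → D ≤ hwt c)
    (hW : ∀ c ∈ C, hwt c ≤ W)
    (hDW : (D : ℚ) / W > ((Fintype.card F : ℚ) - 1) / (Fintype.card F))
    (π : E →ₗ[F] (Fin n → F)) (hπ : Function.Injective π)
    (hmin : IsMinimalCode (Set.range π)) :
    IsMinimalCode (concatCode C π) := by
  classical
  intro x hx hx0 x' hx' hx'0 hsub
  obtain ⟨c, hcC, rfl⟩ := hx
  obtain ⟨c', hc'C, rfl⟩ := hx'
  have hc'0 : c' ≠ 0 := by rintro rfl; exact hx'0 (by funext p; simp)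
  have hπ0 : ∀ y : E, y ≠ 0 → π y ≠ 0 := fun y hy h => hy (hπ (by rw [h, map_zero]))
  have hsupp : ∀ i, {j | π (c' i) j ≠ 0} ⊆ {j | π (c i) j ≠ 0} := by
    intro i j hj
    exact hsub (show (fun p : Fin N × Fin n => π (c' p.1) p.2) (i, j) ≠ 0 from hj)
  have key : ∀ i, ∃ l : F, c' i ≠ 0 → l ≠ 0 ∧ c' i = l • c i := by
    intro i
    by_cases hi : c' i = 0
    · exact ⟨0, fun h => absurd hi h⟩
    · have hπc' : π (c' i) ≠ 0 := hπ0 _ hi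
      have hci : π (c i) ≠ 0 := by
        obtain ⟨j, hj⟩ := Function.ne_iff.mp hπc'
        intro h
        exact hsupp i hj (by simp [h])
      obtain ⟨l, hl0, hl⟩ := hmin (π (c i)) ⟨_, rfl⟩ hci (π (c' i)) ⟨_, rfl⟩ hπc' (hsupp i)
      exact ⟨l, fun _ => ⟨hl0, hπ (by rw [hl, ← map_smul])⟩⟩
  choose L hL using key
  by_cases hex : ∃ l : F, l ≠ 0 ∧ c' = (algebraMap F E l) • c
  · obtain ⟨l, hl0, hceq⟩ := hex
    refine ⟨l, hl0, ?_⟩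
    funext p
    rw [hceq]
    show π ((algebraMap F E) l • c p.1) p.2 = (l • fun p : Fin N × Fin n => π (c p.1) p.2) p
    rw [algebraMap_smul, map_smul]
    rfl
  · exfalso
    set q := Fintype.card F with hq
    have hq2 : 2 ≤ q := Fintype.one_lt_card
    set Sc := Finset.univ.filter (fun i => c i ≠ 0) with hSc
    set Sc' := Finset.univ.filter (fun i => c' i ≠ 0) with hSc'
    have hc'c : ∀ i, c i = 0 → c' i = 0 := by
      intro i h
      by_contra h'
      have h2 := (hL i h').2
      rw [h, smul_zero] at h2
      exact h' h2
    have hZ : ∀ l : F, l ≠ 0 → D + (Sc'.filter (fun i => L i = l)).card ≤ W := by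
      intro l hl
      set z : Fin N → E := c' - (algebraMap F E l) • c with hzdef
      have hzC : z ∈ C := C.sub_mem hc'C (C.smul_mem _ hcC)
      have hz0 : z ≠ 0 := by
        intro h
        exact hex ⟨l, hl, by rwa [sub_eq_zero] at h⟩
      have hSlSc : Sc'.filter (fun i => L i = l) ⊆ Sc := by
        intro i hi
        simp only [hSc, hSc', Finset.mem_filter, Finset.mem_univ, true_and] at hi ⊢
        exact fun h => hi.1 (hc'c i h)
      have hsub2 : (Finset.univ.filter (fun i => z i ≠ 0)) ⊆ Sc \ (Sc'.filter (fun i => L i = l)) := by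
        intro i hi
        simp only [Finset.mem_filter, Finset.mem_univ, true_and] at hi
        have hci : c i ≠ 0 := by
          intro h
          apply hi
          simp [hzdef, h, hc'c i h]
        rw [Finset.mem_sdiff]
        refine ⟨by simp [hSc, hci], ?_⟩
        simp only [hSc', Finset.mem_filter, Finset.mem_univ, true_and, not_and]
        intro hc'i hLi
        apply hi
        have h2 := (hL i hc'i).2
        simp [hzdef, h2, hLi, algebraMap_smul]
      have hcard := Finset.card_le_card hsub2
      rw [Finset.card_sdiff_of_subset hSlSc] at hcard
      have hDz : D ≤ (Finset.univ.filter (fun i => z i ≠ 0)).card := by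
        rw [← hwt_eq_card]; exact hD z hzC hz0
      have hScW : Sc.card ≤ W := by
        rw [hSc, ← hwt_eq_card]; exact hW c hcC
      have hle := Finset.card_le_card hSlSc
      omega
    have hTcard : (Finset.univ.filter (fun l : F => l ≠ 0)).card = q - 1 := by
      rw [Finset.filter_ne' Finset.univ 0, Finset.card_erase_of_mem (Finset.mem_univ 0),
        Finset.card_univ]
    have hfib : ∑ l ∈ Finset.univ.filter (fun l : F => l ≠ 0),
        (Sc'.filter (fun i => L i = l)).card = Sc'.card := by
      rw [← Finset.card_eq_sum_card_fiberwise (f := L)]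
      intro i hi
      simp only [Finset.mem_coe, hSc', Finset.mem_filter, Finset.mem_univ, true_and] at hi ⊢
      exact (hL i hi).1
    have hsum : ∑ l ∈ Finset.univ.filter (fun l : F => l ≠ 0),
        (D + (Sc'.filter (fun i => L i = l)).card) ≤
        ∑ _l ∈ Finset.univ.filter (fun l : F => l ≠ 0), W :=
      Finset.sum_le_sum (fun l hl => hZ l (Finset.mem_filter.mp hl).2)
    rw [Finset.sum_add_distrib, Finset.sum_const, Finset.sum_const, hfib, hTcard,
      smul_eq_mul, smul_eq_mul] at hsum
    have hDc' : D ≤ Sc'.card := by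
      rw [hSc', ← hwt_eq_card]; exact hD c' hc'C hc'0
    have hmain : q * D ≤ (q - 1) * W := by
      have h1 : q * D = (q - 1) * D + D := by
        have : q - 1 + 1 = q := by omega
        calc q * D = (q - 1 + 1) * D := by rw [this]
          _ = (q - 1) * D + D := by ring
      omega
    have hW0 : 0 < W := by
      by_contra h
      have hw : W = 0 := by omega
      rw [hw] at hDW
      norm_num at hDW
      have h1 : (1:ℚ) ≤ q := by exact_mod_cast Nat.one_le_of_lt hq2
      have hqQ : (0:ℚ) < q := by linarith
      have : (0:ℚ) ≤ ((q:ℚ) - 1) / q := div_nonneg (by linarith) hqQ.le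
      linarith
    have hqQ : (0:ℚ) < q := by
      have : (0:ℕ) < q := by omega
      exact_mod_cast this
    have hcast : (q:ℚ) * D ≤ ((q:ℚ) - 1) * W := by
      calc (q:ℚ) * D = ((q * D : ℕ) : ℚ) := by push_cast; ring
        _ ≤ (((q - 1) * W : ℕ) : ℚ) := by exact_mod_cast hmain
        _ = ((q:ℚ) - 1) * W := by
            rw [Nat.cast_mul, Nat.cast_sub (by omega)]; norm_num
    rw [gt_iff_lt, div_lt_div_iff₀ hqQ (by exact_mod_cast hW0)] at hDW
    linarith

/-- Outer AB condition: if the outer `[N,K,D]_{q^k}` code `C` has maximum weight `W` with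
`D/W > (q-1)/q`, and the inner `[n,k,d]_q` code `π(E)` is minimal, then the concatenated code
is a minimal `F_q`-linear code of length `Nn`, dimension `Kk`, and minimum distance `≥ Dd`. -/
theorem outer_AB_condition {F E : Type*} [Field F] [Fintype F] [Field E] [Algebra F E]
    {k N n : ℕ} (hk : Module.finrank F E = k)
    (C : Submodule E (Fin N → E)) (K D W d : ℕ)
    (hK : Module.finrank E C = K)
    (hD : ∀ c ∈ C, c ≠ 0 → D ≤ hwt c)
    (hW : ∀ c ∈ C, hwt c ≤ W)
    (hDW : (D : ℚ) / W > ((Fintype.card F : ℚ) - 1) / (Fintype.card F))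
    (π : E →ₗ[F] (Fin n → F)) (hπ : Function.Injective π)
    (hd : ∀ x : E, x ≠ 0 → d ≤ hwt (π x))
    (hmin : IsMinimalCode (Set.range π)) :
    IsMinimalCode (concatCode C π) ∧
    Module.finrank F (Submodule.span F (concatCode C π)) = K * k ∧
    (∀ x ∈ concatCode C π, x ≠ 0 → D * d ≤ hwt x) ∧
    Fintype.card (Fin N × Fin n) = N * n := by
  classical
  refine ⟨concat_minimal C hD hW hDW π hπ hmin, finrank_concat C π hπ hk hK, ?_, by simp⟩
  intro x hx hx0
  obtain ⟨c, hc, rfl⟩ := hx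
  have hc0 : c ≠ 0 := by rintro rfl; exact hx0 (by funext p; simp)
  have hrw : (fun p : Fin N × Fin n => π (c p.1) p.2) = concatMap π c := rfl
  rw [hrw, hwt_concatMap]
  have hD' : D ≤ (Finset.univ.filter (fun i => c i ≠ 0)).card := by
    rw [← hwt_eq_card]; exact hD c hc hc0
  calc D * d ≤ (Finset.univ.filter (fun i => c i ≠ 0)).card * d := Nat.mul_le_mul_right _ hD'
    _ = ∑ _i ∈ Finset.univ.filter (fun i => c i ≠ 0), d := by
        rw [Finset.sum_const, smul_eq_mul]
    _ ≤ ∑ i ∈ Finset.univ.filter (fun i => c i ≠ 0), hwt (π (c i)) :=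
        Finset.sum_le_sum fun i hi => hd (c i) (Finset.mem_filter.mp hi).2
    _ ≤ ∑ i, hwt (π (c i)) := Finset.sum_le_sum_of_subset (Finset.filter_subset _ _)
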